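/- Suppose there are at least two schools and let |S| > k > ℓ ≥ 1. Then the constrained Gale-Shapley mechanism GS^k is more fair by counting than GS^ℓ: (i) for every problem (P,≻,q), the number of blocking students for GS^ℓ(P,≻,q) under (P,≻,q) is at least the number of blocking students for GS^k(P,≻,q) under (P,≻,q); and (ii) there exists a problem where GS^ℓ(P,≻,q) has strictly more blocking students than GS^k(P,≻,q). -/

import Mathlib

/-!
School choice framework following Bonkoungou–Nesterov,
"Reforms meet fairness concerns in school and college admissions".

Students `I` and schools `S` are finite types with `|I| > |S|`.
A strict preference relation of a student over `S ∪ {∅}` is represented by a list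
of `Option S` containing every element exactly once (earlier = more preferred);
`none` is the outside option.  A strict priority order of a school is a list of
`I` containing every student exactly once (earlier = higher priority).
-/

namespace SchoolChoice

variable {I S : Type*} [Fintype I] [DecidableEq I] [Fintype S] [DecidableEq S]

/-- `p` is a strict preference relation on `S ∪ {∅}`: a ranking list containing every
element of `Option S` exactly once. -/
def ValidPref (p : List (Option S)) : Prop := p.Nodup ∧ ∀ x : Option S, x ∈ p

/-- `pr` is a strict priority order: a ranking list containing every student exactly once. -/
def ValidPrio (pr : List I) : Prop := pr.Nodup ∧ ∀ i : I, i ∈ pr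

/-- `a` is strictly preferred to `b` under the preference relation `p`. -/
def prefLt (p : List (Option S)) (a b : Option S) : Prop := p.idxOf a < p.idxOf b

/-- `i` has strictly higher priority than `j` under the priority order `pr`. -/
def prioLt (pr : List I) (i j : I) : Prop := pr.idxOf i < pr.idxOf j

instance (p : List (Option S)) (a b : Option S) : Decidable (prefLt p a b) :=
  inferInstanceAs (Decidable (_ < _))

instance (pr : List I) (i j : I) : Decidable (prioLt pr i j) :=
  inferInstanceAs (Decidable (_ < _))

/-- The acceptable schools of `p` (those preferred to the outside option), in preference
order. -/
def acceptables (p : List (Option S)) : List S := (p.takeWhile Option.isSome).filterMap id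

/-- The truncation of `p` after its `k`-th acceptable school: the preference relation
listing, in the same order, only the `min k _` most-preferred acceptable schools of `p`,
all other schools being unacceptable (kept below `none` in their original order). -/
def truncate (p : List (Option S)) (k : ℕ) : List (Option S) :=
  ((acceptables p).take k).map some ++
    none :: p.filter (fun x => decide (x ≠ none ∧ x ∉ ((acceptables p).take k).map some))

/-- `μ` is a matching: it respects the capacities `q`. -/
def IsMatching (q : S → ℕ) (μ : I → Option S) : Prop :=
  ∀ s : S, (Finset.univ.filter (fun i => μ i = some s)).card ≤ q s

/-- The pair `(i, s)` blocks `μ` under the problem `(P, prio, q)`. -/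
def Blocks (P : I → List (Option S)) (prio : S → List I) (q : S → ℕ)
    (μ : I → Option S) (i : I) (s : S) : Prop :=
  prefLt (P i) (some s) (μ i) ∧
    ((Finset.univ.filter (fun j => μ j = some s)).card < q s ∨
      ∃ j : I, μ j = some s ∧ prioLt (prio s) i j)

/-- `i` is a blocking student for `μ` under `(P, prio, q)`. -/
def BlockingStudent (P : I → List (Option S)) (prio : S → List I) (q : S → ℕ)
    (μ : I → Option S) (i : I) : Prop :=
  ∃ s : S, Blocks P prio q μ i s

/-- `μ` is individually rational under `P`. -/
def IndividuallyRational (P : I → List (Option S)) (μ : I → Option S) : Prop :=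
  ∀ i : I, ¬ prefLt (P i) none (μ i)

/-- `μ` is stable at `(P, prio, q)`. -/
def IsStable (P : I → List (Option S)) (prio : S → List I) (q : S → ℕ)
    (μ : I → Option S) : Prop :=
  IndividuallyRational P μ ∧ ∀ i : I, ¬ BlockingStudent P prio q μ i

/-- The number of blocking students for `μ` under `(P, prio, q)`. -/
noncomputable def numBlocking (P : I → List (Option S)) (prio : S → List I) (q : S → ℕ)
    (μ : I → Option S) : ℕ :=
  {i : I | BlockingStudent P prio q μ i}.ncard

/-! ### The Gale–Shapley student-proposing deferred acceptance mechanism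

The state `σ : I → ℕ` records, for each student, how many of her acceptable schools
have already rejected her; she currently applies to the `σ i`-th school on her list
(if any).  At each round every school tentatively keeps the `q s` highest-priority
students among its current applicants and rejects the rest, who move on. -/

/-- The school student `i` currently applies to. -/
def daTarget (P : I → List (Option S)) (σ : I → ℕ) (i : I) : Option S :=
  (acceptables (P i))[σ i]?

/-- The students tentatively held by school `s`: the `q s` highest-priority current
applicants. -/
def daHeld (P : I → List (Option S)) (prio : S → List I) (q : S → ℕ)
    (σ : I → ℕ) (s : S) : List I :=
  ((prio s).filter (fun i => decide (daTarget P σ i = some s))).take (q s)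

/-- One round of deferred acceptance: every rejected student moves to her next choice. -/
def daStep (P : I → List (Option S)) (prio : S → List I) (q : S → ℕ)
    (σ : I → ℕ) : I → ℕ := fun i =>
  match daTarget P σ i with
  | none => σ i
  | some s => if i ∈ daHeld P prio q σ s then σ i else σ i + 1

/-- The Gale–Shapley (student-proposing deferred acceptance) mechanism.  Iterating the
round map `|I| * |S| + 1` times is guaranteed to reach the terminal state. -/
def GS (P : I → List (Option S)) (prio : S → List I) (q : S → ℕ) : I → Option S :=
  fun i =>
    let σ := (daStep P prio q)^[Fintype.card I * Fintype.card S + 1] (fun _ => 0)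
    match daTarget P σ i with
    | none => none
    | some s => if i ∈ daHeld P prio q σ s then some s else none

/-- The constrained Gale–Shapley mechanism `GS^k`. -/
def GSk (k : ℕ) (P : I → List (Option S)) (prio : S → List I) (q : S → ℕ) : I → Option S :=
  GS (fun i => truncate (P i) k) prio q

/-! ### The Boston (immediate acceptance) mechanism -/

/-- Round `t` of the Boston mechanism: each not-yet-accepted student applies to her
`t`-th ranked acceptable school (0-indexed), and each school permanently accepts, up to
its remaining capacity, its highest-priority new applicants. -/
def bostonRound (P : I → List (Option S)) (prio : S → List I) (q : S → ℕ)
    (μ : I → Option S) (t : ℕ) : I → Option S := fun i =>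
  match μ i with
  | some s => some s
  | none =>
    match (acceptables (P i))[t]? with
    | none => none
    | some s =>
      if i ∈ ((prio s).filter
            (fun j => decide (μ j = none ∧ (acceptables (P j))[t]? = some s))).take
          (q s - (Finset.univ.filter (fun j => μ j = some s)).card)
      then some s else none

/-- The Boston (immediate acceptance) mechanism. -/
def Boston (P : I → List (Option S)) (prio : S → List I) (q : S → ℕ) : I → Option S :=
  (List.range (Fintype.card S)).foldl (bostonRound P prio q) (fun _ => none)

/-- The constrained Boston mechanism `β^k`. -/
def Bostonk (k : ℕ) (P : I → List (Option S)) (prio : S → List I) (q : S → ℕ) :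
    I → Option S :=
  Boston (fun i => truncate (P i) k) prio q

/-! ### The first-preference-first mechanism -/

/-- The adjusted priority profile: each first-preference-first school (member of `fpf`)
ranks students first by the rank they assign to it under `P` (counting the ranking of the
outside option as well), ties broken by the original priority; equal-preference schools
keep their original priority. -/
def fpfPrio (fpf : Finset S) (P : I → List (Option S)) (prio : S → List I) : S → List I :=
  fun s =>
    if s ∈ fpf then
      (List.range (Fintype.card S + 1)).flatMap
        (fun r => (prio s).filter (fun i => decide ((P i).idxOf (some s) = r)))
    else prio s

/-- The first-preference-first mechanism with set `fpf` of first-preference-first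
schools: Gale–Shapley run on the adjusted priorities. -/
def FPF (fpf : Finset S) (P : I → List (Option S)) (prio : S → List I) (q : S → ℕ) :
    I → Option S :=
  GS P (fpfPrio fpf P prio) q

/-- The constrained first-preference-first mechanism `FPF^k`. -/
def FPFk (fpf : Finset S) (k : ℕ) (P : I → List (Option S)) (prio : S → List I)
    (q : S → ℕ) : I → Option S :=
  FPF fpf (fun i => truncate (P i) k) prio q

/-! ### Manipulation and equilibrium notions -/

/-- Student `i` is a manipulating student of the mechanism `φ` (with priorities and
capacities fixed) at the true profile `P`. -/
def ManipulatingStudent (φ : (I → List (Option S)) → I → Option S)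
    (P : I → List (Option S)) (i : I) : Prop :=
  ∃ Q : List (Option S), ValidPref Q ∧
    prefLt (P i) (φ (Function.update P i Q) i) (φ P i)

/-- The mechanism `φ` is not manipulable at `P`. -/
def NotManipulable (φ : (I → List (Option S)) → I → Option S)
    (P : I → List (Option S)) : Prop :=
  ∀ i : I, ¬ ManipulatingStudent φ P i

/-- `P'` is a Nash equilibrium of the game `(φ, P)` in which the sophisticated students
are the members of `M` (who may misreport, and best respond) and all other (sincere)
students report truthfully. -/
def NashEq (φ : (I → List (Option S)) → I → Option S) (P : I → List (Option S))
    (M : Finset I) (P' : I → List (Option S)) : Prop :=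
  (∀ i, ValidPref (P' i)) ∧ (∀ i ∉ M, P' i = P i) ∧
    ∀ i ∈ M, ∀ Q : List (Option S), ValidPref Q →
      ¬ prefLt (P i) (φ (Function.update P' i Q) i) (φ P' i)

/-! ### Semi-sophisticated students -/

/-- Student `i` is guaranteed her first choice `s`: `s` is her most-preferred acceptable
school and `i` is among the `q s` highest-priority students at `s`. -/
def GuaranteedFirstChoice (P : I → List (Option S)) (prio : S → List I) (q : S → ℕ)
    (i : I) (s : S) : Prop :=
  (acceptables (P i)).head? = some s ∧ (prio s).idxOf i < q s

instance (P : I → List (Option S)) (prio : S → List I) (q : S → ℕ) (i : I) (s : S) :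
    Decidable (GuaranteedFirstChoice P prio q i s) :=
  inferInstanceAs (Decidable (_ ∧ _))

/-- School `s` is competitive: at least `q s` students are guaranteed their first
choice `s`. -/
def Competitive (P : I → List (Option S)) (prio : S → List I) (q : S → ℕ) (s : S) : Prop :=
  q s ≤ (Finset.univ.filter (fun i => GuaranteedFirstChoice P prio q i s)).card

instance (P : I → List (Option S)) (prio : S → List I) (q : S → ℕ) (s : S) :
    Decidable (Competitive P prio q s) :=
  inferInstanceAs (Decidable (_ ≤ _))

/-- `P'` is a Nash equilibrium of the game `(GS^ℓ, P)` with semi-sophisticated students: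
every student guaranteed her first choice reports truthfully; every other student reports
truthfully if she has at most `ℓ` acceptable schools or all her acceptable schools are
competitive, and otherwise lists as acceptable, in the order given by her true preference,
only her acceptable schools that are not competitive. -/
def SemiSophProfile (ℓ : ℕ) (P : I → List (Option S)) (prio : S → List I) (q : S → ℕ)
    (P' : I → List (Option S)) : Prop :=
  ∀ i : I,
    ((∃ s : S, GuaranteedFirstChoice P prio q i s) → P' i = P i) ∧
    (¬ (∃ s : S, GuaranteedFirstChoice P prio q i s) →
      (((acceptables (P i)).length ≤ ℓ ∨ ∀ s ∈ acceptables (P i), Competitive P prio q s) →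
          P' i = P i) ∧
      (¬ ((acceptables (P i)).length ≤ ℓ ∨
            ∀ s ∈ acceptables (P i), Competitive P prio q s) →
          acceptables (P' i) =
            (acceptables (P i)).filter (fun s => decide (¬ Competitive P prio q s))))


section Aux
set_option linter.unusedSectionVars false
variable {I S : Type*} [Fintype I] [DecidableEq I] [Fintype S] [DecidableEq S]

lemma idx_eq (l : List (Option S)) (a : Option S) :
    l.idxOf a = @List.idxOf _ instBEqOfDecidableEq a l := by
  induction l with
  | nil => rfl
  | cons x t ih => by_cases h : x = a <;> simp [List.idxOf_cons, cond_eq_if, beq_iff_eq, h, ih]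

private lemma filterMap_id_map_some (L : List S) : (L.map some).filterMap id = L := by
  induction L with
  | nil => rfl
  | cons a t ih => simp [ih]

private lemma takeWhile_map_some (L : List S) (r : List (Option S)) :
    ((L.map some ++ none :: r).takeWhile Option.isSome) = L.map some := by
  induction L with
  | nil => simp
  | cons a t ih => simpa using ih

lemma acceptables_decomp (L : List S) (r : List (Option S)) :
    acceptables (L.map some ++ none :: r) = L := by
  unfold acceptables
  rw [takeWhile_map_some, filterMap_id_map_some]

private lemma map_some_filterMap (m : List (Option S)) (hm : ∀ x ∈ m, x.isSome) :
    (m.filterMap id).map some = m := by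
  induction m with
  | nil => rfl
  | cons a t ih =>
    match a, hm a (by simp) with
    | some b, _ => simp only [List.filterMap_cons]; simpa using ih fun x hx => hm x (by simp [hx])

lemma ValidPref.exists_decomp {p : List (Option S)} (hp : ValidPref p) :
    ∃ r, p = (acceptables p).map some ++ none :: r := by
  have hmem : none ∈ p.dropWhile Option.isSome := by
    have h1 : (none : Option S) ∈ p := hp.2 none
    rw [← List.takeWhile_append_dropWhile (p := Option.isSome) (l := p), List.mem_append] at h1
    rcases h1 with h1 | h1
    · exact absurd (List.mem_takeWhile_imp h1) (by simp)
    · exact h1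
  have hne : p.dropWhile Option.isSome ≠ [] := List.ne_nil_of_mem hmem
  have hhead : (p.dropWhile Option.isSome).head hne = none := by
    have := List.head_dropWhile_not Option.isSome hne
    simpa [Option.not_isSome_iff_eq_none] using this
  refine ⟨(p.dropWhile Option.isSome).tail, ?_⟩
  have htw : (p.takeWhile Option.isSome) = (acceptables p).map some := by
    unfold acceptables
    exact (map_some_filterMap _ fun x hx => List.mem_takeWhile_imp hx).symm
  conv_lhs => rw [← List.takeWhile_append_dropWhile (p := Option.isSome) (l := p)]
  rw [htw, ← hhead, List.cons_head_tail hne]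

lemma acc_nodup {p : List (Option S)} (hp : ValidPref p) : (acceptables p).Nodup := by
  obtain ⟨r, hr⟩ := hp.exists_decomp
  have := hp.1
  rw [hr] at this
  exact (this.of_append_left).of_map some

private lemma indexOf_map_some (A : List S) (s : S) (hs : s ∈ A) :
    (A.map some).idxOf (some s) = A.idxOf s := by
  induction A with
  | nil => simp at hs
  | cons a t ih =>
    by_cases h : a = s
    · subst h; simp
    · rw [List.map_cons, List.idxOf_cons_ne _ (by simpa using h),
        List.idxOf_cons_ne _ h,
        ih ((List.mem_cons.mp hs).resolve_left (fun e => h e.symm))]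

lemma indexOf_none_eq {p : List (Option S)} (hp : ValidPref p) :
    p.idxOf none = (acceptables p).length := by
  obtain ⟨r, hr⟩ := hp.exists_decomp
  conv_lhs => rw [hr]
  rw [List.idxOf_append_of_notMem (by simp), List.idxOf_cons_self]
  simp

lemma indexOf_some_of_mem {p : List (Option S)} (hp : ValidPref p) {s : S}
    (hs : s ∈ acceptables p) : p.idxOf (some s) = (acceptables p).idxOf s := by
  obtain ⟨r, hr⟩ := hp.exists_decomp
  conv_lhs => rw [hr]
  rw [List.idxOf_append_of_mem (by simpa using hs), indexOf_map_some _ _ hs]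

lemma indexOf_some_of_not_mem {p : List (Option S)} (hp : ValidPref p) {s : S}
    (hs : s ∉ acceptables p) : (acceptables p).length < p.idxOf (some s) := by
  obtain ⟨r, hr⟩ := hp.exists_decomp
  conv_rhs => rw [hr]
  rw [List.idxOf_append_of_notMem (by simpa using hs),
    List.idxOf_cons_ne _ (by simp)]
  simp

lemma prefLt_some_none {p : List (Option S)} (hp : ValidPref p) {s : S} :
    prefLt p (some s) none ↔ s ∈ acceptables p := by
  unfold prefLt
  rw [indexOf_none_eq hp]
  constructor
  · intro h
    by_contra hs
    exact absurd (indexOf_some_of_not_mem hp hs) (by omega)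
  · intro hs
    rw [indexOf_some_of_mem hp hs]
    exact List.idxOf_lt_length_iff.2 hs

lemma not_prefLt_none_some_of_mem {p : List (Option S)} (hp : ValidPref p) {s : S}
    (hs : s ∈ acceptables p) : ¬ prefLt p none (some s) := by
  unfold prefLt
  rw [indexOf_none_eq hp, indexOf_some_of_mem hp hs]
  exact fun h => absurd (List.idxOf_lt_length_iff.2 hs) (by omega)

lemma prefLt_some_some {p : List (Option S)} (hp : ValidPref p) {s t : S}
    (ht : t ∈ acceptables p) :
    prefLt p (some s) (some t) ↔
      s ∈ acceptables p ∧ (acceptables p).idxOf s < (acceptables p).idxOf t := by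
  unfold prefLt
  constructor
  · intro h
    have hs : s ∈ acceptables p := by
      by_contra hs
      have h1 := indexOf_some_of_not_mem hp hs
      have h2 : p.idxOf (some t) = (acceptables p).idxOf t := indexOf_some_of_mem hp ht
      have h3 := List.idxOf_lt_length_iff.2 ht
      omega
    rw [indexOf_some_of_mem hp hs, indexOf_some_of_mem hp ht] at h
    exact ⟨hs, h⟩
  · rintro ⟨hs, h⟩
    rw [indexOf_some_of_mem hp hs, indexOf_some_of_mem hp ht]
    exact h

lemma acc_length_le {p : List (Option S)} (hp : ValidPref p) :
    (acceptables p).length ≤ Fintype.card S :=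
  (acc_nodup hp).length_le_card

end Aux

section Trunc
set_option linter.unusedSectionVars false
variable {I S : Type*} [Fintype I] [DecidableEq I] [Fintype S] [DecidableEq S]

lemma acceptables_truncate (p : List (Option S)) (k : ℕ) :
    acceptables (truncate p k) = (acceptables p).take k :=
  acceptables_decomp _ _

lemma validPref_truncate {p : List (Option S)} (hp : ValidPref p) (k : ℕ) :
    ValidPref (truncate p k) := by
  constructor
  · unfold truncate
    rw [List.nodup_append]
    refine ⟨List.Nodup.map (Option.some_injective S) (List.Sublist.nodup (List.take_sublist _ _) (acc_nodup hp)), ?_, ?_⟩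
    · rw [List.nodup_cons]
      constructor
      · intro hmem
        have := List.of_mem_filter hmem
        simp at this
      · exact hp.1.filter _
    · intro x hx y hy hxy
      subst hxy
      rcases List.mem_cons.mp hy with h | hy
      · subst h
        rcases List.mem_map.mp hx with ⟨s, _, hs⟩
        exact absurd hs (by simp)
      · have := List.of_mem_filter hy
        simp only [decide_eq_true_eq] at this
        exact this.2 hx
  · intro x
    unfold truncate
    rcases x with _ | s
    · simp
    · by_cases hx : some s ∈ ((acceptables p).take k).map some
      · exact List.mem_append_left _ hx
      · refine List.mem_append_right _ (List.mem_cons_of_mem _ (List.mem_filter.mpr ⟨hp.2 _, ?_⟩))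
        simp only [decide_eq_true_eq]
        exact ⟨by simp, hx⟩

end Trunc

section DACore
set_option linter.unusedSectionVars false
variable {I S : Type*} [Fintype I] [DecidableEq I] [Fintype S] [DecidableEq S]

/-- general list helper: a nodup list is pairwise-increasing in `indexOf`. -/
lemma nodup_pairwise_indexOf {α : Type*} [DecidableEq α] {l : List α} (h : l.Nodup) :
    l.Pairwise fun a b => l.idxOf a < l.idxOf b := by
  rw [List.pairwise_iff_getElem]
  intro i j hi hj hij
  rw [List.Nodup.idxOf_getElem h _ hi, List.Nodup.idxOf_getElem h _ hj]
  exact hij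

/-- helper: if a list is pairwise increasing in `f` and its filter by `f · < c` has length
at least `n`, then its first `n` elements all have `f · < c`. -/
lemma take_of_filter_le {α : Type*} (f : α → ℕ) (c : ℕ) :
    ∀ (l : List α), (l.Pairwise fun a b => f a < f b) → ∀ (n : ℕ),
      n ≤ (l.filter fun a => decide (f a < c)).length →
      (l.take n).length = n ∧ ∀ a ∈ l.take n, f a < c := by
  intro l
  induction l with
  | nil => intro _ n hn; simp at hn; simp [hn]
  | cons x t ih =>
    intro hl n hn
    rcases n with _ | m
    · simp
    · by_cases hx : f x < c
      · rw [List.filter_cons_of_pos (by simpa using hx)] at hn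
        obtain ⟨h1, h2⟩ := ih (List.pairwise_cons.mp hl).2 m (by simpa using hn)
        refine ⟨by simpa using h1, ?_⟩
        intro a ha
        rcases List.mem_cons.mp ha with h | h
        · subst h; exact hx
        · exact h2 a (by simpa using h)
      · exfalso
        have hall : ∀ a ∈ x :: t, ¬ (f a < c) := by
          intro a ha
          rcases List.mem_cons.mp ha with h | h
          · subst h; exact hx
          · exact fun hc => hx (lt_trans ((List.pairwise_cons.mp hl).1 a h) hc)
        rw [List.filter_eq_nil_iff.mpr (by intro a ha; simpa using hall a ha)] at hn
        simp at hn
  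
/-- helper: pairwise relation across take/drop. -/
lemma take_rel_of_mem_drop {α : Type*} {R : α → α → Prop} {l : List α} (hl : l.Pairwise R)
    {n : ℕ} {b : α} (hb : b ∈ l.drop n) : ∀ a ∈ l.take n, R a b := by
  have hsplit : l = l.take n ++ l.drop n := (List.take_append_drop n l).symm
  rw [hsplit] at hl
  exact fun a ha => (List.pairwise_append.mp hl).2.2 a ha b hb

variable (P : I → List (Option S)) (prio : S → List I) (q : S → ℕ)

/-- the pool of applicants of school `s`. -/
def pool (σ : I → ℕ) (s : S) : List I :=
  (prio s).filter (fun i => decide (daTarget P σ i = some s))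

lemma daHeld_eq_take (σ : I → ℕ) (s : S) :
    daHeld P prio q σ s = (pool P prio σ s).take (q s) := rfl

lemma mem_pool {σ : I → ℕ} {s : S} {i : I} :
    i ∈ pool P prio σ s ↔ i ∈ prio s ∧ daTarget P σ i = some s := by
  simp [pool, List.mem_filter]

lemma pool_nodup {σ : I → ℕ} {s : S} (h : (prio s).Nodup) : (pool P prio σ s).Nodup :=
  h.filter _

lemma pool_pairwise {σ : I → ℕ} {s : S} (h : (prio s).Nodup) :
    (pool P prio σ s).Pairwise fun a b => (prio s).idxOf a < (prio s).idxOf b :=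
  (nodup_pairwise_indexOf h).sublist List.filter_sublist

lemma held_nodup {σ : I → ℕ} {s : S} (h : (prio s).Nodup) : (daHeld P prio q σ s).Nodup :=
  ((List.take_sublist _ _).trans List.filter_sublist).nodup h

lemma held_subset_pool (σ : I → ℕ) (s : S) : daHeld P prio q σ s ⊆ pool P prio σ s :=
  List.take_subset _ _

lemma held_length_le (σ : I → ℕ) (s : S) : (daHeld P prio q σ s).length ≤ q s := by
  rw [daHeld_eq_take]
  exact (List.length_take).le.trans (min_le_left _ _)

lemma daTarget_none_iff {σ : I → ℕ} {i : I} :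
    daTarget P σ i = none ↔ (acceptables (P i)).length ≤ σ i := by
  unfold daTarget
  exact List.getElem?_eq_none_iff

lemma daTarget_some {σ : I → ℕ} {i : I} {s : S} (h : daTarget P σ i = some s) :
    ∃ hlt : σ i < (acceptables (P i)).length, (acceptables (P i))[σ i] = s :=
  List.getElem?_eq_some_iff.mp h

lemma daStep_target_none {σ : I → ℕ} {i : I} (h : daTarget P σ i = none) :
    daStep P prio q σ i = σ i := by
  unfold daStep; rw [h]

lemma daStep_held {σ : I → ℕ} {i : I} {s : S} (h : daTarget P σ i = some s)
    (hh : i ∈ daHeld P prio q σ s) : daStep P prio q σ i = σ i := by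
  unfold daStep; rw [h]; simp [hh]

lemma daStep_rejected {σ : I → ℕ} {i : I} {s : S} (h : daTarget P σ i = some s)
    (hh : i ∉ daHeld P prio q σ s) : daStep P prio q σ i = σ i + 1 := by
  unfold daStep; rw [h]; simp [hh]

lemma le_daStep (σ : I → ℕ) (i : I) : σ i ≤ daStep P prio q σ i := by
  rcases h : daTarget P σ i with _ | s
  · rw [daStep_target_none P prio q h]
  · by_cases hh : i ∈ daHeld P prio q σ s
    · rw [daStep_held P prio q h hh]
    · rw [daStep_rejected P prio q h hh]; omega

lemma daStep_le_len {σ : I → ℕ} (h : ∀ i, σ i ≤ (acceptables (P i)).length) (i : I) :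
    daStep P prio q σ i ≤ (acceptables (P i)).length := by
  rcases ht : daTarget P σ i with _ | s
  · rw [daStep_target_none P prio q ht]; exact h i
  · obtain ⟨hlt, -⟩ := daTarget_some P ht
    by_cases hh : i ∈ daHeld P prio q σ s
    · rw [daStep_held P prio q ht hh]; exact h i
    · rw [daStep_rejected P prio q ht hh]; omega

lemma iterate_le_len {σ : I → ℕ} (h : ∀ i, σ i ≤ (acceptables (P i)).length) (n : ℕ) :
    ∀ i, (daStep P prio q)^[n] σ i ≤ (acceptables (P i)).length := by
  induction n with
  | zero => exact h
  | succ m ih =>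
    intro i
    rw [Function.iterate_succ_apply']
    exact daStep_le_len P prio q ih i

/-- `s` is full with students all of higher priority than `i`. -/
def FullBeats (σ : I → ℕ) (s : S) (i : I) : Prop :=
  (daHeld P prio q σ s).length = q s ∧ ∀ j ∈ daHeld P prio q σ s, prioLt (prio s) j i

lemma fullBeats_of_rejected {σ : I → ℕ} {i : I} {s : S} (hpr : ValidPrio (prio s))
    (ht : daTarget P σ i = some s) (hh : i ∉ daHeld P prio q σ s) :
    FullBeats P prio q σ s i := by
  have hip : i ∈ pool P prio σ s := (mem_pool P prio).mpr ⟨hpr.2 i, ht⟩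
  have hsplit : i ∈ (pool P prio σ s).take (q s) ++ (pool P prio σ s).drop (q s) := by
    rw [List.take_append_drop]; exact hip
  have hidrop : i ∈ (pool P prio σ s).drop (q s) := by
    rcases List.mem_append.mp hsplit with h | h
    · exact absurd h (by rwa [daHeld_eq_take] at hh)
    · exact h
  have hlen : q s < (pool P prio σ s).length := by
    by_contra hle
    rw [List.drop_eq_nil_of_le (by omega)] at hidrop
    simp at hidrop
  constructor
  · rw [daHeld_eq_take, List.length_take]
    omega
  · intro j hj
    exact take_rel_of_mem_drop (pool_pairwise P prio hpr.1) hidrop j hj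

/-- core transfer lemma: if `s` is full with high-priority students under `σ` (profile `P`)
and all those students are in `s`'s pool under `σ'` (profile `P'`), then `s` is full with
high-priority students under `σ'` as well. -/
lemma fullBeats_transfer {P' : I → List (Option S)} {σ σ' : I → ℕ} {s : S} {i : I}
    (hpr : ValidPrio (prio s))
    (hsub : ∀ j ∈ daHeld P prio q σ s, j ∈ pool P' prio σ' s)
    (hfb : FullBeats P prio q σ s i) : FullBeats P' prio q σ' s i := by
  set c := (prio s).idxOf i with hc
  have hsub2 : daHeld P prio q σ s ⊆
      (pool P' prio σ' s).filter (fun a => decide ((prio s).idxOf a < c)) := by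
    intro j hj
    exact List.mem_filter.mpr ⟨hsub j hj, by simpa [prioLt] using hfb.2 j hj⟩
  have hlen : q s ≤ ((pool P' prio σ' s).filter
      (fun a => decide ((prio s).idxOf a < c))).length := by
    rw [← hfb.1]
    exact ((held_nodup P prio q hpr.1).subperm hsub2).length_le
  obtain ⟨h1, h2⟩ := take_of_filter_le (fun a => (prio s).idxOf a) c (pool P' prio σ' s)
    (pool_pairwise P' prio hpr.1) (q s) hlen
  exact ⟨h1, fun j hj => h2 j hj⟩

lemma held_subset_pool_step {σ : I → ℕ} {s : S} :
    ∀ j ∈ daHeld P prio q σ s, j ∈ pool P prio (daStep P prio q σ) s := by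
  intro j hj
  obtain ⟨hjm, hjt⟩ := (mem_pool P prio).mp (held_subset_pool P prio q σ s hj)
  refine (mem_pool P prio).mpr ⟨hjm, ?_⟩
  show (acceptables (P j))[daStep P prio q σ j]? = some s
  rw [daStep_held P prio q hjt hj]
  exact hjt

lemma fullBeats_step {σ : I → ℕ} {s : S} {i : I} (hpr : ValidPrio (prio s))
    (hfb : FullBeats P prio q σ s i) : FullBeats P prio q (daStep P prio q σ) s i :=
  fullBeats_transfer P prio q hpr (held_subset_pool_step P prio q) hfb

lemma fullBeats_iterate {σ : I → ℕ} {s : S} {i : I} (hpr : ValidPrio (prio s))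
    (hfb : FullBeats P prio q σ s i) (n : ℕ) :
    FullBeats P prio q ((daStep P prio q)^[n] σ) s i := by
  induction n with
  | zero => exact hfb
  | succ m ih => rw [Function.iterate_succ_apply']; exact fullBeats_step P prio q hpr ih

/-- length of held lists only grows when held students stay in the pool. -/
lemma held_length_le_of_subset {P' : I → List (Option S)} {σ σ' : I → ℕ} {s : S}
    (hpr : ValidPrio (prio s))
    (hsub : ∀ j ∈ daHeld P prio q σ s, j ∈ pool P' prio σ' s) :
    (daHeld P prio q σ s).length ≤ (daHeld P' prio q σ' s).length := by
  have h1 : (daHeld P prio q σ s).length ≤ (pool P' prio σ' s).length :=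
    ((held_nodup P prio q hpr.1).subperm hsub).length_le
  have h2 := held_length_le P prio q σ s
  rw [daHeld_eq_take (σ := σ'), List.length_take]
  exact le_min h2 h1

lemma held_length_step {σ : I → ℕ} {s : S} (hpr : ValidPrio (prio s)) :
    (daHeld P prio q σ s).length ≤ (daHeld P prio q (daStep P prio q σ) s).length :=
  held_length_le_of_subset P prio q hpr (held_subset_pool_step P prio q)

lemma held_length_iterate {σ : I → ℕ} {s : S} (hpr : ValidPrio (prio s)) (n : ℕ) :
    (daHeld P prio q σ s).length ≤ (daHeld P prio q ((daStep P prio q)^[n] σ) s).length := by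
  induction n with
  | zero => exact le_rfl
  | succ m ih =>
    rw [Function.iterate_succ_apply']
    exact ih.trans (held_length_step P prio q hpr)

/-- the runtime invariant: every school that a student has passed is full with
higher-priority students. -/
def RunInv (σ : I → ℕ) : Prop :=
  ∀ i s, s ∈ acceptables (P i) → (acceptables (P i)).idxOf s < σ i →
    FullBeats P prio q σ s i

lemma runInv_step (hprio : ∀ s, ValidPrio (prio s))
    {σ : I → ℕ} (h : RunInv P prio q σ) : RunInv P prio q (daStep P prio q σ) := by
  intro i s hs hlt
  rcases ht : daTarget P σ i with _ | t
  · rw [daStep_target_none P prio q ht] at hlt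
    exact fullBeats_step P prio q (hprio s) (h i s hs hlt)
  · by_cases hh : i ∈ daHeld P prio q σ t
    · rw [daStep_held P prio q ht hh] at hlt
      exact fullBeats_step P prio q (hprio s) (h i s hs hlt)
    · rw [daStep_rejected P prio q ht hh] at hlt
      rcases Nat.lt_succ_iff_lt_or_eq.mp hlt with hlt' | heq
      · exact fullBeats_step P prio q (hprio s) (h i s hs hlt')
      · have h1 : (acceptables (P i))[(acceptables (P i)).idxOf s]? = some s :=
          List.getElem?_idxOf hs
        rw [heq] at h1
        have h2 : (acceptables (P i))[σ i]? = some t := ht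
        rw [h2] at h1
        have hts : t = s := Option.some_inj.mp h1
        subst hts
        exact fullBeats_step P prio q (hprio t)
          (fullBeats_of_rejected P prio q (hprio t) ht hh)

lemma runInv_iterate (hprio : ∀ s, ValidPrio (prio s))
    {σ : I → ℕ} (h : RunInv P prio q σ) (n : ℕ) :
    RunInv P prio q ((daStep P prio q)^[n] σ) := by
  induction n with
  | zero => exact h
  | succ m ih => rw [Function.iterate_succ_apply']; exact runInv_step P prio q hprio ih

lemma runInv_zero : RunInv P prio q (fun _ => 0) := by
  intro i s hs hlt
  simp at hlt

end DACore

section DAFix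
set_option linter.unusedSectionVars false
variable {I S : Type*} [Fintype I] [DecidableEq I] [Fintype S] [DecidableEq S]
variable (P : I → List (Option S)) (prio : S → List I) (q : S → ℕ)

/-- the outcome map extracted from a state. -/
def outMatch (σ : I → ℕ) : I → Option S := fun i =>
  match daTarget P σ i with
  | none => none
  | some s => if i ∈ daHeld P prio q σ s then some s else none

lemma GS_eq_outMatch :
    GS P prio q =
      outMatch P prio q ((daStep P prio q)^[Fintype.card I * Fintype.card S + 1]
        (fun _ => 0)) := rfl

lemma GSk_eq_outMatch (k : ℕ) :
    GSk k P prio q =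
      outMatch (fun i => truncate (P i) k) prio q
        ((daStep (fun i => truncate (P i) k) prio q)^[Fintype.card I * Fintype.card S + 1]
          (fun _ => 0)) := rfl

/-- after `|I|·|S| + 1` iterations the process has reached a fixed point. -/
lemma daStep_iterate_fixed {σ0 : I → ℕ}
    (hlen : ∀ i, σ0 i ≤ (acceptables (P i)).length)
    (hcard : ∀ i, (acceptables (P i)).length ≤ Fintype.card S) :
    daStep P prio q ((daStep P prio q)^[Fintype.card I * Fintype.card S + 1] σ0) =
      (daStep P prio q)^[Fintype.card I * Fintype.card S + 1] σ0 := by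
  set N := Fintype.card I * Fintype.card S + 1 with hN
  set f := daStep P prio q with hf
  have key : ∃ t ≤ N, f (f^[t] σ0) = f^[t] σ0 := by
    by_contra hno
    push_neg at hno
    have hgrow : ∀ t, t ≤ N → t ≤ ∑ i, f^[t] σ0 i := by
      intro t
      induction t with
      | zero => intro _; exact Nat.zero_le _
      | succ m ih =>
        intro hm
        have hlt : ∑ i, f^[m] σ0 i < ∑ i, f^[m + 1] σ0 i := by
          apply Finset.sum_lt_sum
          · intro i _
            rw [Function.iterate_succ_apply']
            exact le_daStep P prio q _ i
          · have hne := hno m (by omega)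
            rcases Function.ne_iff.mp hne with ⟨i, hi⟩
            refine ⟨i, Finset.mem_univ i, ?_⟩
            rw [Function.iterate_succ_apply']
            have hle := le_daStep P prio q (f^[m] σ0) i
            exact lt_of_le_of_ne hle (Ne.symm hi)
        have := ih (by omega)
        omega
    have hub : ∑ i, f^[N] σ0 i ≤ Fintype.card I * Fintype.card S := by
      calc ∑ i, f^[N] σ0 i ≤ ∑ _i : I, Fintype.card S :=
            Finset.sum_le_sum fun i _ =>
              (iterate_le_len P prio q hlen N i).trans (hcard i)
        _ = Fintype.card I * Fintype.card S := by
            rw [Finset.sum_const, Finset.card_univ, smul_eq_mul]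
    have := hgrow N le_rfl
    omega
  obtain ⟨t, ht, hfix⟩ := key
  have : f^[N] σ0 = f^[t] σ0 := by
    have : N = (N - t) + t := by omega
    rw [this, Function.iterate_add_apply]
    exact Function.iterate_fixed hfix (N - t)
  rw [this]
  exact hfix

variable {P prio q}

section FixedPoint
variable {σ : I → ℕ} (hfix : daStep P prio q σ = σ)
include hfix

omit hfix in
lemma outMatch_target_some {i : I} {t : S} (ht : daTarget P σ i = some t) :
    outMatch P prio q σ i = if i ∈ daHeld P prio q σ t then some t else none := by
  unfold outMatch; rw [ht]

omit hfix in
lemma outMatch_target_none {i : I} (ht : daTarget P σ i = none) :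
    outMatch P prio q σ i = none := by
  unfold outMatch; rw [ht]

lemma held_of_target_fix {i : I} {s : S} (ht : daTarget P σ i = some s) :
    i ∈ daHeld P prio q σ s := by
  by_contra hh
  have := daStep_rejected P prio q ht hh
  rw [congrFun hfix i] at this
  omega

lemma outMatch_eq_some_iff {i : I} {s : S} :
    outMatch P prio q σ i = some s ↔ daTarget P σ i = some s := by
  rcases ht : daTarget P σ i with _ | t
  · rw [outMatch_target_none ht]
  · rw [outMatch_target_some ht, if_pos (held_of_target_fix hfix ht)]

lemma mem_held_iff_outMatch {i : I} {s : S} :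
    i ∈ daHeld P prio q σ s ↔ outMatch P prio q σ i = some s := by
  rw [outMatch_eq_some_iff hfix]
  constructor
  · intro h
    exact ((mem_pool P prio).mp (held_subset_pool P prio q σ s h)).2
  · exact held_of_target_fix hfix

lemma card_outMatch_eq_held (hpr : ValidPrio (prio s)) :
    (Finset.univ.filter (fun j => outMatch P prio q σ j = some s)).card =
      (daHeld P prio q σ s).length := by
  rw [← List.toFinset_card_of_nodup (held_nodup P prio q hpr.1)]
  congr 1
  ext j
  simp only [Finset.mem_filter, Finset.mem_univ, true_and, List.mem_toFinset]
  exact (mem_held_iff_outMatch hfix).symm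

lemma card_outMatch_le (hpr : ValidPrio (prio s)) :
    (Finset.univ.filter (fun j => outMatch P prio q σ j = some s)).card ≤ q s := by
  rw [card_outMatch_eq_held hfix hpr]
  exact held_length_le P prio q σ s

lemma outMatch_none_iff {i : I} (hle : σ i ≤ (acceptables (P i)).length) :
    outMatch P prio q σ i = none ↔ σ i = (acceptables (P i)).length := by
  rcases ht : daTarget P σ i with _ | t
  · rw [outMatch_target_none ht]
    have := (daTarget_none_iff P).mp ht
    exact ⟨fun _ => by omega, fun _ => rfl⟩
  · rw [outMatch_target_some ht, if_pos (held_of_target_fix hfix ht)]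
    obtain ⟨hlt, -⟩ := daTarget_some P ht
    exact ⟨fun h => by simp at h, fun h => by omega⟩

lemma outMatch_some_mem {i : I} {s : S} (h : outMatch P prio q σ i = some s) :
    s ∈ acceptables (P i) := by
  obtain ⟨hlt, hget⟩ := daTarget_some P ((outMatch_eq_some_iff hfix).mp h)
  exact hget ▸ List.getElem_mem _

/-- stability of the outcome at a fixed point satisfying the run invariant. -/
lemma no_blocking_of_fix (hval : ∀ i, ValidPref (P i)) (hprio : ∀ s, ValidPrio (prio s))
    (hlen : ∀ i, σ i ≤ (acceptables (P i)).length) (hinv : RunInv P prio q σ) :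
    ∀ i, ¬ BlockingStudent P prio q (outMatch P prio q σ) i := by
  rintro i ⟨s, hpref, hcond⟩
  have hacc := acc_nodup (hval i)
  have key : FullBeats P prio q σ s i := by
    rcases hout : outMatch P prio q σ i with _ | t
    · rw [hout] at hpref
      have hs : s ∈ acceptables (P i) := (prefLt_some_none (hval i)).mp hpref
      refine hinv i s hs ?_
      have := (outMatch_none_iff hfix (hlen i)).mp hout
      have := List.idxOf_lt_length_iff.mpr hs
      omega
    · rw [hout] at hpref
      obtain ⟨hlt, hget⟩ := daTarget_some P ((outMatch_eq_some_iff hfix).mp hout)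
      have htmem : t ∈ acceptables (P i) := hget ▸ List.getElem_mem _
      obtain ⟨hs, hidx⟩ := (prefLt_some_some (hval i) htmem).mp hpref
      refine hinv i s hs ?_
      have : (acceptables (P i)).idxOf t = σ i := by
        rw [← hget]
        exact List.Nodup.idxOf_getElem hacc _ hlt
      omega
  rcases hcond with hlt | ⟨j, hj, hij⟩
  · rw [card_outMatch_eq_held hfix (hprio s), key.1] at hlt
    omega
  · have := key.2 j ((mem_held_iff_outMatch hfix).mpr hj)
    unfold prioLt at this hij
    omega

end FixedPoint

/-- the rank bound associated to a matching `lam` (with respect to profile `Pb`). -/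
def lamBound (Pb : I → List (Option S)) (lam : I → Option S) (i : I) : ℕ :=
  match lam i with
  | none => (acceptables (Pb i)).length
  | some s => (acceptables (Pb i)).idxOf s

lemma lamBound_none {Pb : I → List (Option S)} {lam : I → Option S} {i : I}
    (h : lam i = none) : lamBound Pb lam i = (acceptables (Pb i)).length := by
  unfold lamBound; rw [h]

lemma lamBound_some {Pb : I → List (Option S)} {lam : I → Option S} {i : I} {s : S}
    (h : lam i = some s) : lamBound Pb lam i = (acceptables (Pb i)).idxOf s := by
  unfold lamBound; rw [h]

/-- the key optimality invariant: a run (over a truncation profile `P`) never pushes a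
student past her rank in any stable matching of the fuller profile `Pb`. -/
lemma bound_step {Pb : I → List (Option S)} {lam : I → Option S}
    (hvalb : ∀ i, ValidPref (Pb i))
    (hpre : ∀ i, acceptables (P i) <+: acceptables (Pb i))
    (hprio : ∀ s, ValidPrio (prio s))
    (hcap : ∀ s, (Finset.univ.filter (fun j => lam j = some s)).card ≤ q s)
    (hIR : ∀ i s, lam i = some s → s ∈ acceptables (Pb i))
    (hnb : ∀ i, ¬ BlockingStudent Pb prio q lam i)
    {σ : I → ℕ} (hσ : ∀ i, σ i ≤ lamBound Pb lam i) :
    ∀ i, daStep P prio q σ i ≤ lamBound Pb lam i := by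
  intro i
  rcases ht : daTarget P σ i with _ | t
  · rw [daStep_target_none P prio q ht]; exact hσ i
  · by_cases hh : i ∈ daHeld P prio q σ t
    · rw [daStep_held P prio q ht hh]; exact hσ i
    · rw [daStep_rejected P prio q ht hh]
      rcases lt_or_eq_of_le (hσ i) with h | heq
      · omega
      · exfalso
        obtain ⟨hlt, hget⟩ := daTarget_some P ht
        have hgetb : (acceptables (Pb i))[σ i]'(lt_of_lt_of_le hlt
            (hpre i).length_le) = t := by
          rw [← (hpre i).getElem hlt]
          exact hget
        -- `lam i` must be `some t`
        have hlam : lam i = some t := by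
          rcases hl : lam i with _ | u
          · rw [lamBound_none hl] at heq
            have := (hpre i).length_le
            omega
          · rw [lamBound_some hl] at heq
            have hu : u ∈ acceptables (Pb i) := hIR i u hl
            have h1 : (acceptables (Pb i))[(acceptables (Pb i)).idxOf u]? = some u :=
              List.getElem?_idxOf hu
            rw [← heq] at h1
            have h2 : (acceptables (Pb i))[σ i]? = some t :=
              List.getElem?_eq_some_iff.mpr ⟨lt_of_lt_of_le hlt (hpre i).length_le, hgetb⟩
            rw [h2] at h1
            exact h1.symm
        -- i was rejected: the held set is full with higher-priority students
        have hfb := fullBeats_of_rejected P prio q (hprio t) ht hh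
        -- find a held student j not matched to t by lam
        have hj : ∃ j ∈ daHeld P prio q σ t, lam j ≠ some t := by
          by_contra hall
          push_neg at hall
          have hsub : insert i (daHeld P prio q σ t).toFinset ⊆
              Finset.univ.filter (fun j => lam j = some t) := by
            intro x hx
            rcases Finset.mem_insert.mp hx with rfl | hx
            · exact Finset.mem_filter.mpr ⟨Finset.mem_univ _, hlam⟩
            · exact Finset.mem_filter.mpr ⟨Finset.mem_univ _,
                hall x (List.mem_toFinset.mp hx)⟩
          have hcard := Finset.card_le_card hsub
          rw [Finset.card_insert_of_notMem (by
              simp only [List.mem_toFinset]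
              exact hh),
            List.toFinset_card_of_nodup (held_nodup P prio q (hprio t).1), hfb.1] at hcard
          have := hcap t
          omega
        obtain ⟨j, hjmem, hjlam⟩ := hj
        -- j's current target is t, within Pb as well
        obtain ⟨hjprio, hjt⟩ := (mem_pool P prio).mp (held_subset_pool P prio q σ t hjmem)
        obtain ⟨hjlt, hjget⟩ := daTarget_some P hjt
        have hjltb : σ j < (acceptables (Pb j)).length :=
          lt_of_lt_of_le hjlt (hpre j).length_le
        have hjgetb : (acceptables (Pb j))[σ j]'hjltb = t := by
          rw [← (hpre j).getElem hjlt]; exact hjget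
        have hjrank : (acceptables (Pb j)).idxOf t = σ j := by
          rw [← hjgetb]
          exact List.Nodup.idxOf_getElem (acc_nodup (hvalb j)) _ hjltb
        have htmemb : t ∈ acceptables (Pb j) := hjgetb ▸ List.getElem_mem _
        -- (j, t) blocks lam at Pb
        apply hnb j
        refine ⟨t, ?_, Or.inr ⟨i, hlam, hfb.2 j hjmem⟩⟩
        rcases hl : lam j with _ | u
        · exact (prefLt_some_none (hvalb j)).mpr htmemb
        · have hu : u ∈ acceptables (Pb j) := hIR j u hl
          refine (prefLt_some_some (hvalb j) hu).mpr ⟨htmemb, ?_⟩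
          have hbnd := hσ j
          rw [lamBound_some hl] at hbnd
          have hne : t ≠ u := fun e => hjlam (e ▸ hl)
          have := (List.idxOf_inj (y := u) htmemb).not.mpr hne
          omega

lemma bound_iterate {Pb : I → List (Option S)} {lam : I → Option S}
    (hvalb : ∀ i, ValidPref (Pb i))
    (hpre : ∀ i, acceptables (P i) <+: acceptables (Pb i))
    (hprio : ∀ s, ValidPrio (prio s))
    (hcap : ∀ s, (Finset.univ.filter (fun j => lam j = some s)).card ≤ q s)
    (hIR : ∀ i s, lam i = some s → s ∈ acceptables (Pb i))
    (hnb : ∀ i, ¬ BlockingStudent Pb prio q lam i)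
    {σ : I → ℕ} (hσ : ∀ i, σ i ≤ lamBound Pb lam i) (n : ℕ) :
    ∀ i, (daStep P prio q)^[n] σ i ≤ lamBound Pb lam i := by
  induction n with
  | zero => exact hσ
  | succ m ih =>
    intro i
    rw [Function.iterate_succ_apply']
    exact bound_step hvalb hpre hprio hcap hIR hnb ih i

end DAFix

section Compare
set_option linter.unusedSectionVars false
variable {I S : Type*} [Fintype I] [DecidableEq I] [Fintype S] [DecidableEq S]

lemma lamBound_outMatch_eq {P : I → List (Option S)} {prio : S → List I} {q : S → ℕ}
    {σ : I → ℕ} (hfix : daStep P prio q σ = σ) (hval : ∀ i, ValidPref (P i))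
    (hlen : ∀ i, σ i ≤ (acceptables (P i)).length) (i : I) :
    lamBound P (outMatch P prio q σ) i = σ i := by
  rcases h : outMatch P prio q σ i with _ | s
  · rw [lamBound_none h]
    exact ((outMatch_none_iff hfix (hlen i)).mp h).symm
  · rw [lamBound_some h]
    obtain ⟨hlt, hget⟩ := daTarget_some P ((outMatch_eq_some_iff hfix).mp h)
    rw [← hget]
    exact List.Nodup.idxOf_getElem (acc_nodup (hval i)) _ hlt

theorem gs_compare (P Pb : I → List (Option S)) (prio : S → List I) (q : S → ℕ)
    (hvalP : ∀ i, ValidPref (P i)) (hvalPb : ∀ i, ValidPref (Pb i))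
    (hpre : ∀ i, acceptables (P i) <+: acceptables (Pb i))
    (hprio : ∀ s, ValidPrio (prio s)) :
    (∀ s : S, (Finset.univ.filter (fun j => GS P prio q j = some s)).card ≤
          (Finset.univ.filter (fun j => GS Pb prio q j = some s)).card) ∧
    (∀ (s : S) (i : I),
        ((Finset.univ.filter (fun j => GS P prio q j = some s)).card = q s ∧
          ∀ j, GS P prio q j = some s → prioLt (prio s) j i) →
        ((Finset.univ.filter (fun j => GS Pb prio q j = some s)).card = q s ∧
          ∀ j, GS Pb prio q j = some s → prioLt (prio s) j i)) := by
  set N := Fintype.card I * Fintype.card S + 1 with hN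
  set σν := (daStep P prio q)^[N] (fun _ => 0) with hσν
  have hfixν : daStep P prio q σν = σν :=
    daStep_iterate_fixed P prio q (fun i => Nat.zero_le _)
      (fun i => acc_length_le (hvalP i))
  have hlenν : ∀ i, σν i ≤ (acceptables (P i)).length :=
    iterate_le_len P prio q (fun i => Nat.zero_le _) N
  have hinvν : RunInv P prio q σν :=
    runInv_iterate P prio q hprio (runInv_zero P prio q) N
  have hlenν' : ∀ i, σν i ≤ (acceptables (Pb i)).length :=
    fun i => (hlenν i).trans (hpre i).length_le
  set σh := (daStep Pb prio q)^[N] σν with hσh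
  have hfixh : daStep Pb prio q σh = σh :=
    daStep_iterate_fixed Pb prio q hlenν' (fun i => acc_length_le (hvalPb i))
  have hlenh : ∀ i, σh i ≤ (acceptables (Pb i)).length :=
    iterate_le_len Pb prio q hlenν' N
  -- pools transfer from P to Pb
  have hpool : ∀ (σ' : I → ℕ) (s : S), ∀ j ∈ pool P prio σ' s, j ∈ pool Pb prio σ' s := by
    intro σ' s j hj
    obtain ⟨hjm, hjt⟩ := (mem_pool P prio).mp hj
    obtain ⟨hlt, hget⟩ := daTarget_some P hjt
    refine (mem_pool Pb prio).mpr ⟨hjm, ?_⟩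
    show (acceptables (Pb j))[σ' j]? = some s
    exact List.getElem?_eq_some_iff.mpr ⟨lt_of_lt_of_le hlt (hpre j).length_le,
      (((hpre j).getElem hlt).symm.trans hget)⟩
  have hFBtrans : ∀ (σ' : I → ℕ) (s : S) (i : I),
      FullBeats P prio q σ' s i → FullBeats Pb prio q σ' s i := by
    intro σ' s i hfb
    exact fullBeats_transfer P prio q (hprio s)
      (fun j hj => hpool σ' s j (held_subset_pool P prio q σ' s hj)) hfb
  -- the run invariant transfers to the second phase
  have hinvσν : RunInv Pb prio q σν := by
    intro i s hs hlt
    have h1 : (acceptables (Pb i)).idxOf s < (acceptables (P i)).length :=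
      lt_of_lt_of_le hlt (hlenν i)
    have hgetb : (acceptables (Pb i))[(acceptables (Pb i)).idxOf s]'
        (List.idxOf_lt_length_iff.mpr hs) = s :=
      List.getElem_idxOf (List.idxOf_lt_length_iff.mpr hs)
    have hgetP : (acceptables (P i))[(acceptables (Pb i)).idxOf s]'h1 = s :=
      ((hpre i).getElem h1).trans hgetb
    have hsP : s ∈ acceptables (P i) := hgetP ▸ List.getElem_mem _
    have hidxP : (acceptables (P i)).idxOf s = (acceptables (Pb i)).idxOf s := by
      conv_lhs => rw [← hgetP]
      exact List.Nodup.idxOf_getElem (acc_nodup (hvalP i)) _ h1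
    exact hFBtrans σν s i (hinvν i s hsP (by omega))
  have hinvh : RunInv Pb prio q σh := runInv_iterate Pb prio q hprio hinvσν N
  -- the zero-start run for Pb
  set σμ := (daStep Pb prio q)^[N] (fun _ => 0) with hσμ
  have hfixμ : daStep Pb prio q σμ = σμ :=
    daStep_iterate_fixed Pb prio q (fun i => Nat.zero_le _)
      (fun i => acc_length_le (hvalPb i))
  have hlenμ : ∀ i, σμ i ≤ (acceptables (Pb i)).length :=
    iterate_le_len Pb prio q (fun i => Nat.zero_le _) N
  have hinvμ : RunInv Pb prio q σμ :=
    runInv_iterate Pb prio q hprio (runInv_zero Pb prio q) N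
  -- both fixed points are stable matchings of Pb; by mutual optimality they agree
  have hprefix_refl : ∀ i, acceptables (Pb i) <+: acceptables (Pb i) :=
    fun i => List.prefix_refl _
  have hb1 : ∀ i, σμ i ≤ σh i := by
    have := bound_iterate (P := Pb) (prio := prio) (q := q)
      (lam := outMatch Pb prio q σh) hvalPb hprefix_refl hprio
      (fun s => card_outMatch_le hfixh (hprio s))
      (fun i s h => outMatch_some_mem hfixh h)
      (no_blocking_of_fix hfixh hvalPb hprio hlenh hinvh)
      (σ := fun _ => 0) (fun i => Nat.zero_le _) N
    intro i
    have h2 := this i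
    rwa [lamBound_outMatch_eq hfixh hvalPb hlenh i] at h2
  have hb2 : ∀ i, σh i ≤ σμ i := by
    have hcapμ : ∀ s, (Finset.univ.filter
        (fun j => outMatch Pb prio q σμ j = some s)).card ≤ q s :=
      fun s => card_outMatch_le hfixμ (hprio s)
    have hIRμ : ∀ i s, outMatch Pb prio q σμ i = some s → s ∈ acceptables (Pb i) :=
      fun i s h => outMatch_some_mem hfixμ h
    have hnbμ := no_blocking_of_fix hfixμ hvalPb hprio hlenμ hinvμ
    have hstep1 : ∀ i, σν i ≤ lamBound Pb (outMatch Pb prio q σμ) i :=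
      bound_iterate (P := P) (prio := prio) (q := q) hvalPb hpre hprio hcapμ hIRμ hnbμ
        (σ := fun _ => 0) (fun i => Nat.zero_le _) N
    have hstep2 : ∀ i, σh i ≤ lamBound Pb (outMatch Pb prio q σμ) i :=
      bound_iterate (P := Pb) (prio := prio) (q := q) hvalPb hprefix_refl hprio
        hcapμ hIRμ hnbμ hstep1 N
    intro i
    have h2 := hstep2 i
    rwa [lamBound_outMatch_eq hfixμ hvalPb hlenμ i] at h2
  have hσeq : σμ = σh := funext fun i => le_antisymm (hb1 i) (hb2 i)
  have hGSP : GS P prio q = outMatch P prio q σν := GS_eq_outMatch P prio q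
  have hGSPb : GS Pb prio q = outMatch Pb prio q σh := by
    rw [GS_eq_outMatch Pb prio q, ← hσμ, hσeq]
  constructor
  · intro s
    rw [hGSP, hGSPb, card_outMatch_eq_held hfixν (hprio s),
      card_outMatch_eq_held hfixh (hprio s)]
    have h1 : (daHeld P prio q σν s).length ≤ (daHeld Pb prio q σν s).length :=
      held_length_le_of_subset P prio q (hprio s)
        (fun j hj => hpool σν s j (held_subset_pool P prio q σν s hj))
    have h2 : (daHeld Pb prio q σν s).length ≤ (daHeld Pb prio q σh s).length :=
      held_length_iterate Pb prio q (hprio s) N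
    omega
  · intro s i hfb
    have hfb1 : FullBeats P prio q σν s i := by
      constructor
      · rw [← card_outMatch_eq_held hfixν (hprio s), ← hGSP]
        exact hfb.1
      · intro j hj
        exact hfb.2 j (by rw [hGSP]; exact (mem_held_iff_outMatch hfixν).mp hj)
    have hfb2 : FullBeats Pb prio q σh s i := by
      rw [hσh]
      exact fullBeats_iterate Pb prio q (hprio s) (hFBtrans σν s i hfb1) N
    constructor
    · rw [hGSPb, card_outMatch_eq_held hfixh (hprio s)]
      exact hfb2.1
    · intro j hj
      rw [hGSPb] at hj
      exact hfb2.2 j ((mem_held_iff_outMatch hfixh).mpr hj)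
end Compare

section PartOne
set_option linter.unusedSectionVars false
variable {I S : Type*} [Fintype I] [DecidableEq I] [Fintype S] [DecidableEq S]

lemma gs_stable_valid (P : I → List (Option S)) (prio : S → List I) (q : S → ℕ)
    (hval : ∀ i, ValidPref (P i)) (hprio : ∀ s, ValidPrio (prio s)) :
    (∀ i, ¬ BlockingStudent P prio q (GS P prio q) i) ∧
    (∀ s, (Finset.univ.filter (fun j => GS P prio q j = some s)).card ≤ q s) ∧
    (∀ i s, GS P prio q i = some s → s ∈ acceptables (P i)) := by
  rw [GS_eq_outMatch]
  have hfix := daStep_iterate_fixed P prio q (σ0 := fun _ => 0) (fun i => Nat.zero_le _)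
    (fun i => acc_length_le (hval i))
  have hlen := iterate_le_len P prio q (σ := fun _ => 0) (fun i => Nat.zero_le _)
    (Fintype.card I * Fintype.card S + 1)
  have hinv := runInv_iterate P prio q hprio (runInv_zero P prio q)
    (Fintype.card I * Fintype.card S + 1)
  exact ⟨no_blocking_of_fix hfix hval hprio hlen hinv,
    fun s => card_outMatch_le hfix (hprio s),
    fun i s h => outMatch_some_mem hfix h⟩

lemma indexOf_lt_of_mem_take {A : List S} (hA : A.Nodup) {t : S} {k : ℕ}
    (ht : t ∈ A.take k) : t ∈ A ∧ A.idxOf t < k := by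
  obtain ⟨n, hn, hget⟩ := List.mem_iff_getElem.mp ht
  have hn' : n < A.length ∧ n < k := by
    rw [List.length_take] at hn
    omega
  rw [List.getElem_take] at hget
  refine ⟨hget ▸ List.getElem_mem _, ?_⟩
  rw [← hget, List.Nodup.idxOf_getElem hA _ hn'.1]
  exact hn'.2

lemma mem_take_of_indexOf_lt {A : List S} {t : S} {k : ℕ} (ht : t ∈ A)
    (h : A.idxOf t < k) : t ∈ A.take k := by
  have hlt := List.idxOf_lt_length_iff.mpr ht
  refine List.mem_iff_getElem.mpr ⟨A.idxOf t, ?_, ?_⟩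
  · rw [List.length_take]
    omega
  · rw [List.getElem_take]
    exact List.getElem_idxOf hlt

lemma indexOf_take_eq {A : List S} (hA : A.Nodup) {t : S} {k : ℕ} (ht : t ∈ A)
    (h : A.idxOf t < k) : (A.take k).idxOf t = A.idxOf t := by
  have hlt := List.idxOf_lt_length_iff.mpr ht
  have h1 : (A.take k)[A.idxOf t]'(by rw [List.length_take]; omega) = t := by
    rw [List.getElem_take]
    exact List.getElem_idxOf hlt
  conv_lhs => rw [← h1]
  exact List.Nodup.idxOf_getElem (List.Nodup.sublist (List.take_sublist _ _) hA) _ _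

lemma numBlocking_eq_card (P : I → List (Option S)) (prio : S → List I) (q : S → ℕ)
    (μ : I → Option S) [DecidablePred (BlockingStudent P prio q μ)] :
    numBlocking P prio q μ =
      (Finset.univ.filter (fun i => BlockingStudent P prio q μ i)).card := by
  rw [numBlocking, ← Set.ncard_coe_finset]
  congr 1
  ext i
  simp

lemma card_matched_eq_sum (μ : I → Option S) :
    (Finset.univ.filter (fun i => μ i ≠ none)).card =
      ∑ s : S, (Finset.univ.filter (fun i => μ i = some s)).card := by
  classical
  rw [Finset.card_eq_sum_card_fiberwise (f := fun i => μ i) (t := Finset.univ)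
    (fun x _ => Finset.mem_univ _)]
  rw [Fintype.sum_option (fun o => ((Finset.univ.filter fun i => μ i ≠ none).filter
    (fun x => μ x = o)).card)]
  have h0 : ((Finset.univ.filter fun i => μ i ≠ none).filter (fun x => μ x = none)).card
      = 0 := by
    rw [Finset.card_eq_zero]
    ext i
    simp only [Finset.mem_filter, Finset.mem_univ, true_and, Finset.notMem_empty,
      iff_false, not_and]
    tauto
  rw [h0, zero_add]
  refine Finset.sum_congr rfl fun s _ => ?_
  congr 1
  ext i
  simp only [Finset.mem_filter, Finset.mem_univ, true_and]
  constructor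
  · exact fun h => h.2
  · intro h
    exact ⟨by simp [h], h⟩

end PartOne

section PartOneMain
set_option linter.unusedSectionVars false
variable {I S : Type*} [Fintype I] [DecidableEq I] [Fintype S] [DecidableEq S]

theorem gsk_le_gsl_blocking (P : I → List (Option S)) (prio : S → List I) (q : S → ℕ)
    (hval : ∀ i, ValidPref (P i)) (hprio : ∀ s, ValidPrio (prio s))
    {l k : ℕ} (hlk : l ≤ k) :
    numBlocking P prio q (GSk k P prio q) ≤ numBlocking P prio q (GSk l P prio q) := by
  classical
  set Pk : I → List (Option S) := fun i => truncate (P i) k with hPk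
  set Pl : I → List (Option S) := fun i => truncate (P i) l with hPl
  have hvalk : ∀ i, ValidPref (Pk i) := fun i => validPref_truncate (hval i) k
  have hvall : ∀ i, ValidPref (Pl i) := fun i => validPref_truncate (hval i) l
  have hacck : ∀ i, acceptables (Pk i) = (acceptables (P i)).take k :=
    fun i => acceptables_truncate _ _
  have haccl : ∀ i, acceptables (Pl i) = (acceptables (P i)).take l :=
    fun i => acceptables_truncate _ _
  have hpre : ∀ i, acceptables (Pl i) <+: acceptables (Pk i) := by
    intro i
    rw [hacck i, haccl i, ← min_eq_left hlk, ← List.take_take]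
    exact List.take_prefix _ _
  have hGSkk : GSk k P prio q = GS Pk prio q := rfl
  have hGSll : GSk l P prio q = GS Pl prio q := rfl
  rw [hGSkk, hGSll]
  set μ := GS Pk prio q with hμ
  set ν := GS Pl prio q with hν
  obtain ⟨hnbμ, hcapμ, hIRμ⟩ := gs_stable_valid Pk prio q hvalk hprio
  obtain ⟨hnbν, hcapν, hIRν⟩ := gs_stable_valid Pl prio q hvall hprio
  obtain ⟨hfills, hfbmono⟩ := gs_compare Pl Pk prio q hvall hvalk hpre hprio
  -- abbreviations
  have hAnodup : ∀ i, (acceptables (P i)).Nodup := fun i => acc_nodup (hval i)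
  -- blocking students for μ (wrt P) are unmatched at μ
  have h_unm : ∀ i, BlockingStudent P prio q μ i → μ i = none := by
    rintro i ⟨s, hpref, hcond⟩
    rcases hmi : μ i with _ | t
    · rfl
    · exfalso
      have htk : t ∈ acceptables (Pk i) := hIRμ i t hmi
      rw [hacck i] at htk
      obtain ⟨htA, hidxt⟩ := indexOf_lt_of_mem_take (hAnodup i) htk
      rw [hmi] at hpref
      obtain ⟨hsA, hidxs⟩ := (prefLt_some_some (hval i) htA).mp hpref
      apply hnbμ i
      refine ⟨s, ?_, hcond⟩
      rw [← hμ, hmi]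
      have hsk : s ∈ (acceptables (P i)).take k :=
        mem_take_of_indexOf_lt hsA (by omega)
      refine (prefLt_some_some (hvalk i) (by rw [hacck i]; exact htk)).mpr ?_
      rw [hacck i]
      refine ⟨hsk, ?_⟩
      rw [indexOf_take_eq (hAnodup i) hsA (by omega),
        indexOf_take_eq (hAnodup i) htA (by omega)]
      exact hidxs
  -- a blocking student of μ has an acceptable school outside her top-k where μ is
  -- not full-with-better
  have h_witness : ∀ i, BlockingStudent P prio q μ i → μ i = none →
      ∃ s, s ∈ acceptables (P i) ∧
        ¬ ((Finset.univ.filter (fun j => μ j = some s)).card = q s ∧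
            ∀ j, μ j = some s → prioLt (prio s) j i) := by
    rintro i ⟨s, hpref, hcond⟩ hmi
    rw [hmi] at hpref
    have hsA : s ∈ acceptables (P i) := (prefLt_some_none (hval i)).mp hpref
    refine ⟨s, hsA, ?_⟩
    rintro ⟨hcard, hall⟩
    rcases hcond with hlt | ⟨j, hj, hij⟩
    · omega
    · have := hall j hj
      unfold prioLt at this hij
      omega
  -- converse: from not-full-with-better to a blocking condition (for unmatched students)
  have h_mkblock : ∀ (μ' : I → Option S) (s : S) (i : I),
      (∀ s', (Finset.univ.filter (fun j => μ' j = some s')).card ≤ q s') →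
      μ' i ≠ some s →
      ¬ ((Finset.univ.filter (fun j => μ' j = some s)).card = q s ∧
          ∀ j, μ' j = some s → prioLt (prio s) j i) →
      ((Finset.univ.filter (fun j => μ' j = some s)).card < q s ∨
        ∃ j, μ' j = some s ∧ prioLt (prio s) i j) := by
    intro μ' s i hcap hne hnfb
    by_cases hc : (Finset.univ.filter (fun j => μ' j = some s)).card = q s
    · right
      push_neg at hnfb
      obtain ⟨j, hj, hnp⟩ := hnfb hc
      refine ⟨j, hj, ?_⟩
      have hji : j ≠ i := fun e => hne (e ▸ hj)
      have hmemi : i ∈ prio s := (hprio s).2 i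
      have hmemj : j ∈ prio s := (hprio s).2 j
      have hne2 : (prio s).idxOf j ≠ (prio s).idxOf i :=
        (List.idxOf_inj (y := i) hmemj).not.mpr hji
      unfold prioLt at hnp ⊢
      omega
    · left
      have := hcap s
      omega
  -- the finsets
  set Bk := Finset.univ.filter (fun i => BlockingStudent P prio q μ i) with hBk
  set Bl := Finset.univ.filter (fun i => BlockingStudent P prio q ν i) with hBl
  set Nμ := Finset.univ.filter (fun i => μ i ≠ none) with hNμ
  set Nν := Finset.univ.filter (fun i => ν i ≠ none) with hNν
  rw [numBlocking_eq_card P prio q μ, numBlocking_eq_card P prio q ν, ← hBk, ← hBl]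
  -- f2 : Bk \ Bl ⊆ Nν \ Nμ
  have f2 : Bk \ Bl ⊆ Nν \ Nμ := by
    intro i hi
    obtain ⟨hiBk, hiBl⟩ := Finset.mem_sdiff.mp hi
    have hblk : BlockingStudent P prio q μ i := (Finset.mem_filter.mp hiBk).2
    have hnotbl : ¬ BlockingStudent P prio q ν i :=
      fun h => (Finset.mem_sdiff.mp hi).2 (Finset.mem_filter.mpr ⟨Finset.mem_univ _, h⟩)
    have hmi : μ i = none := h_unm i hblk
    refine Finset.mem_sdiff.mpr ⟨?_, by simp [hNμ, hmi]⟩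
    by_contra hnu
    have hνi : ν i = none := by
      by_contra h
      exact hnu (Finset.mem_filter.mpr ⟨Finset.mem_univ _, h⟩)
    obtain ⟨s, hsA, hnfb⟩ := h_witness i hblk hmi
    -- ν is not full-with-better at s either (by hfbmono contrapositive)
    have hnfbν : ¬ ((Finset.univ.filter (fun j => ν j = some s)).card = q s ∧
        ∀ j, ν j = some s → prioLt (prio s) j i) := fun h => hnfb (hfbmono s i h)
    apply hnotbl
    refine ⟨s, ?_, ?_⟩
    · rw [hνi]
      exact (prefLt_some_none (hval i)).mpr hsA
    · exact h_mkblock ν s i hcapν (by rw [hνi]; simp) hnfbν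
  -- f3 : Nμ \ Nν ⊆ Bl \ Bk
  have f3 : Nμ \ Nν ⊆ Bl \ Bk := by
    intro j hj
    obtain ⟨hjNμ, hjNν⟩ := Finset.mem_sdiff.mp hj
    have hjμ : μ j ≠ none := (Finset.mem_filter.mp hjNμ).2
    have hjν : ν j = none := by
      by_contra h
      exact hjNν (Finset.mem_filter.mpr ⟨Finset.mem_univ _, h⟩)
    rcases hmu : μ j with _ | u
    · exact absurd hmu hjμ
    have huk : u ∈ acceptables (Pk j) := hIRμ j u hmu
    have huA : u ∈ acceptables (P j) := by
      rw [hacck j] at huk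
      exact (indexOf_lt_of_mem_take (hAnodup j) huk).1
    have hnfbν : ¬ ((Finset.univ.filter (fun i => ν i = some u)).card = q u ∧
        ∀ i, ν i = some u → prioLt (prio u) i j) := by
      rintro hfb
      have := (hfbmono u j hfb).2 j hmu
      unfold prioLt at this
      omega
    refine Finset.mem_sdiff.mpr ⟨Finset.mem_filter.mpr ⟨Finset.mem_univ _, ?_⟩, ?_⟩
    · refine ⟨u, ?_, ?_⟩
      · rw [hjν]
        exact (prefLt_some_none (hval j)).mpr huA
      · exact h_mkblock ν u j hcapν (by rw [hjν]; simp) hnfbν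
    · intro hjBk
      have := h_unm j (Finset.mem_filter.mp hjBk).2
      rw [this] at hmu
      exact absurd hmu (by simp)
  -- f4 : Nν.card ≤ Nμ.card
  have f4 : Nν.card ≤ Nμ.card := by
    rw [hNν, hNμ, card_matched_eq_sum ν, card_matched_eq_sum μ]
    exact Finset.sum_le_sum fun s _ => hfills s
  -- final counting
  have e1 : (Bk ∩ Bl).card + (Bk \ Bl).card = Bk.card := Finset.card_inter_add_card_sdiff _ _
  have e2 : (Bl ∩ Bk).card + (Bl \ Bk).card = Bl.card := Finset.card_inter_add_card_sdiff _ _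
  have e3 : (Nν ∩ Nμ).card + (Nν \ Nμ).card = Nν.card := Finset.card_inter_add_card_sdiff _ _
  have e4 : (Nμ ∩ Nν).card + (Nμ \ Nν).card = Nμ.card := Finset.card_inter_add_card_sdiff _ _
  have e5 : (Bk ∩ Bl).card = (Bl ∩ Bk).card := by rw [Finset.inter_comm]
  have e6 : (Nν ∩ Nμ).card = (Nμ ∩ Nν).card := by rw [Finset.inter_comm]
  have c1 : (Bk \ Bl).card ≤ (Nν \ Nμ).card := Finset.card_le_card f2
  have c2 : (Nμ \ Nν).card ≤ (Bl \ Bk).card := Finset.card_le_card f3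
  omega

end PartOneMain

section PartTwo
set_option linter.unusedSectionVars false
variable {I S : Type*} [Fintype I] [DecidableEq I] [Fintype S] [DecidableEq S]

theorem gsk_strict_example
    (hIS : Fintype.card S < Fintype.card I) (hS : 2 ≤ Fintype.card S)
    (k l : ℕ) (hl : 1 ≤ l) (hlk : l < k) (hkS : k < Fintype.card S) :
    ∃ (P : I → List (Option S)) (prio : S → List I) (q : S → ℕ),
      (∀ i, ValidPref (P i)) ∧ (∀ s, ValidPrio (prio s)) ∧
      numBlocking P prio q (GSk k P prio q) < numBlocking P prio q (GSk l P prio q) := by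
  classical
  have hlS : l < Fintype.card S := lt_trans hlk hkS
  set eS := Fintype.equivFin S with heS
  set eI := Fintype.equivFin I with heI
  set allS : List S := (List.finRange (Fintype.card S)).map (fun r => eS.symm r) with hallS
  have hallS_nodup : allS.Nodup :=
    List.Nodup.map eS.symm.injective (List.nodup_finRange _)
  have hallS_mem : ∀ s : S, s ∈ allS :=
    fun s => List.mem_map.mpr ⟨eS s, List.mem_finRange _, by simp⟩
  have hallS_len : allS.length = Fintype.card S := by simp [hallS]
  set x : I := eI.symm ⟨0, by omega⟩ with hx
  set a : S := eS.symm ⟨l, hlS⟩ with ha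
  set P : I → List (Option S) :=
    fun i => if i = x then allS.map some ++ none :: [] else none :: allS.map some with hP
  set prio : S → List I :=
    fun _ => (List.finRange (Fintype.card I)).map (fun r => eI.symm r) with hprio
  set q : S → ℕ := fun s => if s = a then 1 else 0 with hq
  have hPx : P x = allS.map some ++ none :: [] := by simp [hP]
  have hPj : ∀ j, j ≠ x → P j = none :: allS.map some := fun j hj => by simp [hP, hj]
  have haccx : acceptables (P x) = allS := by rw [hPx]; exact acceptables_decomp _ _
  have haccj : ∀ j, j ≠ x → acceptables (P j) = [] := by
    intro j hj
    rw [hPj j hj]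
    unfold acceptables
    rw [List.takeWhile_cons_of_neg (by simp)]
    rfl
  have hvalP : ∀ i, ValidPref (P i) := by
    intro i
    by_cases hix : i = x
    · subst hix
      rw [hPx]
      constructor
      · rw [List.nodup_append]
        refine ⟨List.Nodup.map (Option.some_injective S) hallS_nodup, by simp, ?_⟩
        intro o ho o' ho' hoo
        subst hoo
        rcases List.mem_map.mp ho with ⟨s, -, rfl⟩
        simp at ho'
      · intro o
        rcases o with _ | s
        · exact List.mem_append_right _ (by simp)
        · exact List.mem_append_left _ (List.mem_map.mpr ⟨s, hallS_mem s, rfl⟩)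
    · rw [hPj i hix]
      constructor
      · rw [List.nodup_cons]
        refine ⟨by simp, List.Nodup.map (Option.some_injective S) hallS_nodup⟩
      · intro o
        rcases o with _ | s
        · simp
        · exact List.mem_cons_of_mem _ (List.mem_map.mpr ⟨s, hallS_mem s, rfl⟩)
  have hvalprio : ∀ s, ValidPrio (prio s) := by
    intro s
    constructor
    · exact List.Nodup.map eI.symm.injective (List.nodup_finRange _)
    · intro i
      exact List.mem_map.mpr ⟨eI i, List.mem_finRange _, by simp⟩
  have hidx : ∀ r : Fin (Fintype.card S), allS.idxOf (eS.symm r) = (r : ℕ) := by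
    intro r
    have hget : allS[(r : ℕ)]'(by rw [hallS_len]; exact r.2) = eS.symm r := by
      simp [hallS]
    conv_lhs => rw [← hget]
    exact List.Nodup.idxOf_getElem hallS_nodup _ _
  have hidxa : allS.idxOf a = l := hidx ⟨l, hlS⟩
  -- the truncated profiles
  set Pk : I → List (Option S) := fun i => truncate (P i) k with hPk
  set Pl : I → List (Option S) := fun i => truncate (P i) l with hPl
  have hvalPk : ∀ i, ValidPref (Pk i) := fun i => validPref_truncate (hvalP i) k
  have hvalPl : ∀ i, ValidPref (Pl i) := fun i => validPref_truncate (hvalP i) l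
  obtain ⟨hnbk, hcapk, hIRk⟩ := gs_stable_valid Pk prio q hvalPk hvalprio
  obtain ⟨hnbl, hcapl, hIRl⟩ := gs_stable_valid Pl prio q hvalPl hvalprio
  -- all students other than x are always unmatched
  have hjnonek : ∀ j, j ≠ x → GS Pk prio q j = none := by
    intro j hj
    rcases h : GS Pk prio q j with _ | s
    · rfl
    · exfalso
      have := hIRk j s h
      rw [hPk] at this
      simp only [acceptables_truncate, haccj j hj, List.take_nil] at this
      exact absurd this (by simp)
  have hjnonel : ∀ j, j ≠ x → GS Pl prio q j = none := by
    intro j hj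
    rcases h : GS Pl prio q j with _ | s
    · rfl
    · exfalso
      have := hIRl j s h
      rw [hPl] at this
      simp only [acceptables_truncate, haccj j hj, List.take_nil] at this
      exact absurd this (by simp)
  -- a matched x must be matched to a
  have hmatch_a : ∀ (G : I → Option S) (t : S), G x = some t →
      (∀ s, (Finset.univ.filter (fun j => G j = some s)).card ≤ q s) → t = a := by
    intro G t hGx hcap
    have h1 : ({x} : Finset I) ⊆ Finset.univ.filter (fun j => G j = some t) := by
      intro y hy
      rw [Finset.mem_singleton] at hy
      subst hy
      exact Finset.mem_filter.mpr ⟨Finset.mem_univ _, hGx⟩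
    have h2 : 1 ≤ (Finset.univ.filter (fun j => G j = some t)).card := by
      have := Finset.card_le_card h1
      simpa using this
    have h3 := hcap t
    by_contra hne
    rw [hq] at h3
    simp only [if_neg hne] at h3
    omega
  -- under `Pl`, student x is unmatched
  have hxl : GS Pl prio q x = none := by
    rcases h : GS Pl prio q x with _ | t
    · rfl
    · exfalso
      have hta : t = a := hmatch_a _ t h hcapl
      have hmem := hIRl x t h
      rw [hPl] at hmem
      simp only [acceptables_truncate, haccx] at hmem
      obtain ⟨-, hlt⟩ := indexOf_lt_of_mem_take hallS_nodup hmem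
      rw [hta, hidxa] at hlt
      omega
  -- under `Pk`, student x is matched to a
  have hxk : GS Pk prio q x = some a := by
    rcases h : GS Pk prio q x with _ | t
    · exfalso
      apply hnbk x
      refine ⟨a, ?_, Or.inl ?_⟩
      · rw [h]
        refine (prefLt_some_none (hvalPk x)).mpr ?_
        rw [hPk]
        simp only [acceptables_truncate, haccx]
        exact mem_take_of_indexOf_lt (hallS_mem a) (by omega)
      · have hempty : Finset.univ.filter (fun j => GS Pk prio q j = some a) = ∅ := by
          rw [Finset.eq_empty_iff_forall_notMem]
          intro j hj
          have hj2 := (Finset.mem_filter.mp hj).2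
          by_cases hjx : j = x
          · subst hjx
            rw [h] at hj2
            exact absurd hj2 (by simp)
          · rw [hjnonek j hjx] at hj2
            exact absurd hj2 (by simp)
        rw [hempty]
        simp [hq]
    · rw [hmatch_a _ t h hcapk]
  -- x blocks the GS^l outcome at a (with respect to the true preferences)
  have hblock_x : BlockingStudent P prio q (GS Pl prio q) x := by
    refine ⟨a, ?_, Or.inl ?_⟩
    · rw [hxl]
      refine (prefLt_some_none (hvalP x)).mpr ?_
      rw [haccx]
      exact hallS_mem a
    · have hempty : Finset.univ.filter (fun j => GS Pl prio q j = some a) = ∅ := by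
        rw [Finset.eq_empty_iff_forall_notMem]
        intro j hj
        have hj2 := (Finset.mem_filter.mp hj).2
        by_cases hjx : j = x
        · subst hjx
          rw [hxl] at hj2
          exact absurd hj2 (by simp)
        · rw [hjnonel j hjx] at hj2
          exact absurd hj2 (by simp)
      rw [hempty]
      simp [hq]
  -- nobody blocks the GS^k outcome
  have hnoblock : ∀ i, ¬ BlockingStudent P prio q (GS Pk prio q) i := by
    rintro i ⟨s, hpref, hcond⟩
    by_cases hix : i = x
    · subst hix
      rw [hxk] at hpref
      have hamem : a ∈ acceptables (P x) := by rw [haccx]; exact hallS_mem a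
      obtain ⟨hsmem, hslt⟩ := (prefLt_some_some (hvalP x) hamem).mp hpref
      rw [haccx] at hsmem hslt
      rw [hidxa] at hslt
      have hsa : s ≠ a := by
        intro e
        subst e
        rw [hidxa] at hslt
        omega
      rcases hcond with hlt | ⟨j, hj, hij⟩
      · rw [hq] at hlt
        simp only [if_neg hsa] at hlt
        omega
      · by_cases hjx : j = x
        · subst hjx
          rw [hxk] at hj
          exact hsa (Option.some_inj.mp hj).symm
        · rw [hjnonek j hjx] at hj
          exact absurd hj (by simp)
    · have hmi : GS Pk prio q i = none := hjnonek i hix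
      rw [hmi] at hpref
      unfold prefLt at hpref
      have h0 : (P i).idxOf none = 0 := by
        rw [indexOf_none_eq (hvalP i), haccj i hix]
        rfl
      rw [h0] at hpref
      omega
  -- conclude
  refine ⟨P, prio, q, hvalP, hvalprio, ?_⟩
  have hzero : numBlocking P prio q (GSk k P prio q) = 0 := by
    have hset : {i : I | BlockingStudent P prio q (GSk k P prio q) i} = ∅ := by
      rw [Set.eq_empty_iff_forall_notMem]
      exact hnoblock
    rw [numBlocking, hset]
    simp
  have hpos : 0 < numBlocking P prio q (GSk l P prio q) := by
    rw [numBlocking]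
    refine (Set.ncard_pos (Set.toFinite _)).mpr ⟨x, ?_⟩
    exact hblock_x
  omega

end PartTwo

/-- Theorem 3: with at least two schools and `|S| > k > ℓ ≥ 1`, the
constrained Gale–Shapley mechanism `GS^k` is more fair by counting (the blocking
students) than `GS^ℓ`. -/
theorem gsk_more_fair_by_counting_than_gsl
    {I S : Type*} [Fintype I] [DecidableEq I] [Fintype S] [DecidableEq S]
    (hIS : Fintype.card S < Fintype.card I) (hS : 2 ≤ Fintype.card S)
    (k l : ℕ) (hl : 1 ≤ l) (hlk : l < k) (hkS : k < Fintype.card S) :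
    (∀ (P : I → List (Option S)) (prio : S → List I) (q : S → ℕ),
        (∀ i, ValidPref (P i)) → (∀ s, ValidPrio (prio s)) →
        numBlocking P prio q (GSk k P prio q) ≤ numBlocking P prio q (GSk l P prio q)) ∧
    (∃ (P : I → List (Option S)) (prio : S → List I) (q : S → ℕ),
        (∀ i, ValidPref (P i)) ∧ (∀ s, ValidPrio (prio s)) ∧
        numBlocking P prio q (GSk k P prio q) < numBlocking P prio q (GSk l P prio q)) := by
  constructor
  · intro P prio q hval hprio
    exact gsk_le_gsl_blocking P prio q hval hprio (le_of_lt hlk)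
  · exact gsk_strict_example hIS hS k l hl hlk hkS

end SchoolChoice
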